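/- arXiv:1811.00457 — 2 statements merged into one kernel-verified Lean document; each statement's English description precedes it below -/
import Mathlib

section
/- Let N > 0, s > 0, σ₁ > 0 and c > 1, and define n₁* = s·(√(2c²(c²+1)·N·σ₁² + (2c⁴+5c²+2)·s²) − c·s·(1+2c²))/(2(c³+c)·σ₁²) and n₂* = s·(c·√(2c²(c²+1)·N·σ₁² + (2c⁴+5c²+2)·s²) − (c²+2)·s)/(2c²(c²+1)·σ₁²). Then n₂* > n₁*; that is, the optimal incumbent/challenger test allocates a strictly larger sample to the challenger treatment. -/
open Real

theorem challenger_sample_larger (N s σ₁ c : ℝ)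
    (hN : 0 < N) (hs : 0 < s) (hσ₁ : 0 < σ₁) (hc : 1 < c)
    (n₁star n₂star : ℝ)
    (hn₁ : n₁star = s * (Real.sqrt (2 * c ^ 2 * (c ^ 2 + 1) * N * σ₁ ^ 2 +
        (2 * c ^ 4 + 5 * c ^ 2 + 2) * s ^ 2) - c * s * (1 + 2 * c ^ 2)) /
      (2 * (c ^ 3 + c) * σ₁ ^ 2))
    (hn₂ : n₂star = s * (c * Real.sqrt (2 * c ^ 2 * (c ^ 2 + 1) * N * σ₁ ^ 2 +
        (2 * c ^ 4 + 5 * c ^ 2 + 2) * s ^ 2) - (c ^ 2 + 2) * s) /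
      (2 * c ^ 2 * (c ^ 2 + 1) * σ₁ ^ 2)) :
    n₂star > n₁star := by
  have hc0 : 0 < c := lt_trans one_pos hc
  have hσ2 : 0 < σ₁ ^ 2 := pow_pos hσ₁ 2
  set R := Real.sqrt (2 * c ^ 2 * (c ^ 2 + 1) * N * σ₁ ^ 2 +
      (2 * c ^ 4 + 5 * c ^ 2 + 2) * s ^ 2) with hRdef
  have hd1 : 0 < 2 * (c ^ 3 + c) * σ₁ ^ 2 := by positivity
  have hd2 : 0 < 2 * c ^ 2 * (c ^ 2 + 1) * σ₁ ^ 2 := by positivity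
  rw [hn₁, hn₂, gt_iff_lt, div_lt_div_iff₀ hd1 hd2]
  have h4 : (1:ℝ) < c ^ 4 := one_lt_pow₀ hc (by norm_num)
  nlinarith [mul_pos (mul_pos (mul_pos hc0 hσ2) (mul_pos hs hs)) (sub_pos.mpr h4)]
end

section
/- Let N > 0, s > 0, σ₁ > 0 and c > 1, and define n₁* = s·(√(2c²(c²+1)·N·σ₁² + (2c⁴+5c²+2)·s²) − c·s·(1+2c²))/(2(c³+c)·σ₁²) and n₂* = s·(c·√(2c²(c²+1)·N·σ₁² + (2c⁴+5c²+2)·s²) − (c²+2)·s)/(2c²(c²+1)·σ₁²). Then n₂* > 0, and n₁* > 0 if and only if N > (2c⁴ − c² − 1)·s²/(c²·σ₁²). -/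
open Real

theorem incumbent_challenger_positivity (N s σ₁ c : ℝ)
    (hN : 0 < N) (hs : 0 < s) (hσ₁ : 0 < σ₁) (hc : 1 < c)
    (n₁star n₂star : ℝ)
    (hn₁ : n₁star = s * (Real.sqrt (2 * c ^ 2 * (c ^ 2 + 1) * N * σ₁ ^ 2 +
        (2 * c ^ 4 + 5 * c ^ 2 + 2) * s ^ 2) - c * s * (1 + 2 * c ^ 2)) /
      (2 * (c ^ 3 + c) * σ₁ ^ 2))
    (hn₂ : n₂star = s * (c * Real.sqrt (2 * c ^ 2 * (c ^ 2 + 1) * N * σ₁ ^ 2 +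
        (2 * c ^ 4 + 5 * c ^ 2 + 2) * s ^ 2) - (c ^ 2 + 2) * s) /
      (2 * c ^ 2 * (c ^ 2 + 1) * σ₁ ^ 2)) :
    0 < n₂star ∧
    (0 < n₁star ↔ (2 * c ^ 4 - c ^ 2 - 1) * s ^ 2 / (c ^ 2 * σ₁ ^ 2) < N) := by
  have hc0 : (0:ℝ) < c := lt_trans one_pos hc
  set A : ℝ := 2 * c ^ 2 * (c ^ 2 + 1) * N * σ₁ ^ 2 +
      (2 * c ^ 4 + 5 * c ^ 2 + 2) * s ^ 2 with hA
  have hA0 : 0 ≤ A := by positivity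
  set r : ℝ := Real.sqrt A with hrdef
  have hr : r ^ 2 = A := Real.sq_sqrt hA0
  have hr0 : 0 ≤ r := Real.sqrt_nonneg _
  constructor
  · rw [hn₂]
    apply div_pos
    · apply mul_pos hs
      have h1 : c ^ 2 * r ^ 2 > ((c ^ 2 + 2) * s) ^ 2 := by
        rw [hr, hA]
        have h1a : (0:ℝ) < c ^ 2 - 1 := by nlinarith
        have h1b : (0:ℝ) < c ^ 4 + 3 * c ^ 2 + 2 := by positivity
        nlinarith [mul_pos (mul_pos h1a h1b) (mul_pos hs hs),
          (by positivity : (0:ℝ) < 2 * c ^ 4 * (c ^ 2 + 1) * N * σ₁ ^ 2)]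
      nlinarith [mul_nonneg hc0.le hr0, hs.le]
    · positivity
  · rw [hn₁, div_lt_iff₀ (by positivity : (0:ℝ) < c ^ 2 * σ₁ ^ 2)]
    constructor
    · intro h
      have hd : (0:ℝ) < 2 * (c ^ 3 + c) * σ₁ ^ 2 := by positivity
      have h2 : 0 < s * (r - c * s * (1 + 2 * c ^ 2)) := by
        by_contra hcon
        push_neg at hcon
        have : n₁star ≤ 0 := by
          rw [hn₁]; exact div_nonpos_of_nonpos_of_nonneg hcon hd.le
        linarith
      have h3 : r > c * s * (1 + 2 * c ^ 2) := by nlinarith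
      have hsum : 0 < r + c * s * (1 + 2 * c ^ 2) := by
        have : (0:ℝ) < c * s * (1 + 2 * c ^ 2) := by positivity
        linarith
      have h4 : r ^ 2 > (c * s * (1 + 2 * c ^ 2)) ^ 2 := by
        nlinarith [mul_pos (sub_pos.2 h3) hsum]
      rw [hr, hA] at h4
      nlinarith [sq_nonneg s, sq_nonneg σ₁]
    · intro h
      apply div_pos _ (by positivity)
      apply mul_pos hs
      have h4 : (c * s * (1 + 2 * c ^ 2)) ^ 2 < A := by
        rw [hA]; nlinarith [sq_nonneg s]
      have h3 : c * s * (1 + 2 * c ^ 2) < r := by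
        nlinarith [hr, h4, hr0, (by positivity : (0:ℝ) ≤ c * s * (1 + 2 * c ^ 2))]
      linarith
end
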